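/- For every 2 ≤ T ≤ n, k ≥ 1 with √(T/k) ∈ ℕ, every deterministic learner for prediction with n experts' advice under apple tasting feedback makes at least √(Tk) mistakes on some k-realizable sequence of length T. -/

import Mathlib

/-- A deterministic learner for prediction with expert advice under apple tasting
feedback: it maps the history (experts' predictions and, when the learner predicted `1`,
the revealed true label) together with the current experts' predictions to a prediction. -/
def ExpertLearner (n : ℕ) : Type :=
  List ((Fin n → Bool) × Option Bool) → (Fin n → Bool) → Bool

/-- The feedback history produced by running learner `Lrn` on expert predictions `P`
and true labels `y` under apple tasting feedback. -/
def histE (n : ℕ) (Lrn : ExpertLearner n) (P : ℕ → Fin n → Bool) (y : ℕ → Bool) :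
    ℕ → List ((Fin n → Bool) × Option Bool)
  | 0 => []
  | t + 1 =>
      histE n Lrn P y t ++
        [(P t, if Lrn (histE n Lrn P y t) (P t) = true then some (y t) else none)]

/-- The learner's prediction in round `t`. -/
def predE (n : ℕ) (Lrn : ExpertLearner n) (P : ℕ → Fin n → Bool) (y : ℕ → Bool)
    (t : ℕ) : Bool :=
  Lrn (histE n Lrn P y t) (P t)

/-- The number of mistakes made by the learner during the first `T` rounds. -/
def mistakesE (n : ℕ) (Lrn : ExpertLearner n) (P : ℕ → Fin n → Bool) (y : ℕ → Bool)
    (T : ℕ) : ℕ :=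
  ((Finset.range T).filter (fun t => predE n Lrn P y t ≠ y t)).card

/-- If `y` agrees with `y'` on every round where the learner (run against `y'`)
predicts `1`, the histories coincide. -/
lemma histE_congr (n : ℕ) (Lrn : ExpertLearner n) (P : ℕ → Fin n → Bool) (y y' : ℕ → Bool)
    (h : ∀ t, Lrn (histE n Lrn P y' t) (P t) = true → y t = y' t) :
    ∀ t, histE n Lrn P y t = histE n Lrn P y' t := by
  intro t
  induction t with
  | zero => rfl
  | succ t ih =>
    show histE n Lrn P y t ++ _ = histE n Lrn P y' t ++ _
    rw [ih]
    by_cases hc : Lrn (histE n Lrn P y' t) (P t) = true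
    · simp [hc, h t hc]
    · simp [hc]

lemma predE_congr (n : ℕ) (Lrn : ExpertLearner n) (P : ℕ → Fin n → Bool) (y y' : ℕ → Bool)
    (h : ∀ t, predE n Lrn P y' t = true → y t = y' t) :
    ∀ t, predE n Lrn P y t = predE n Lrn P y' t := by
  intro t
  unfold predE
  rw [histE_congr n Lrn P y y' h]

theorem experts_agnostic_lower_bound (n T k m : ℕ)
    (hT : 2 ≤ T) (hn : T ≤ n) (hk : 1 ≤ k) (hm : T = k * m ^ 2) :
    ∀ Lrn : ExpertLearner n, ∃ (P : ℕ → Fin n → Bool) (y : ℕ → Bool),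
      (∃ j : Fin n, ((Finset.range T).filter (fun t => P t j ≠ y t)).card ≤ k) ∧
      k * m ≤ mistakesE n Lrn P y T := by
  intro Lrn
  have hm1 : 1 ≤ m := by
    rcases Nat.eq_zero_or_pos m with h | h
    · subst h; simp at hm; omega
    · exact h
  set L := k * m with hLdef
  have hL0 : 0 < L := Nat.mul_pos hk hm1
  have hTL : T = L * m := by rw [hLdef, hm]; ring
  set P : ℕ → Fin n → Bool := fun t j => decide ((j : ℕ) = t / L) with hP
  set p : ℕ → Bool := predE n Lrn P (fun _ => false) with hp
  -- the phase of round `t` is `t / L`; each round `t < T` lies in a phase `< m`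
  have hphase_lt : ∀ t < T, t / L < m := by
    intro t ht
    rw [Nat.div_lt_iff_lt_mul hL0]
    rw [hTL, mul_comm] at ht
    exact ht
  -- the set of rounds in phase `i` (for `i < m`)
  have phase_eq : ∀ i < m, (Finset.range T).filter (fun t => t / L = i) =
      Finset.Ico (i * L) (i * L + L) := by
    intro i hi
    ext t
    simp only [Finset.mem_filter, Finset.mem_range, Finset.mem_Ico]
    constructor
    · rintro ⟨ht, rfl⟩
      refine ⟨Nat.div_mul_le_self t L, ?_⟩
      have h1 := Nat.div_add_mod t L
      have h2 := Nat.mod_lt t hL0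
      calc t = t / L * L + t % L := by rw [mul_comm]; omega
        _ < t / L * L + L := by omega
    · rintro ⟨h1, h2⟩
      have hdiv : t / L = i := Nat.div_eq_of_lt_le h1 (by rw [add_mul, one_mul]; omega)
      refine ⟨?_, hdiv⟩
      have : i * L + L = (i + 1) * L := by ring
      have hle : (i + 1) * L ≤ m * L := Nat.mul_le_mul_right L hi
      rw [hTL, mul_comm]
      omega
  by_cases hcase : ∃ i, i < m ∧
      ((Finset.range T).filter (fun t => t / L = i ∧ p t = true)).card < k
  · -- some phase where the learner predicts 1 fewer than k times
    obtain ⟨i, him, hik⟩ := hcase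
    set y : ℕ → Bool := fun t => decide (t / L = i ∧ t < T) && !(p t) with hy
    have hy0 : ∀ t, p t = true → y t = false := by
      intro t ht; simp [hy, ht]
    have hpred : ∀ t, predE n Lrn P y t = p t := by
      intro t
      exact predE_congr n Lrn P y (fun _ => false) (fun t ht => hy0 t ht) t
    have himn : i < n := by
      have hmT : m ≤ T := by nlinarith
      omega
    refine ⟨P, y, ⟨⟨i, himn⟩, ?_⟩, ?_⟩
    · -- expert i errs at most k times
      have hsub : (Finset.range T).filter (fun t => P t ⟨i, himn⟩ ≠ y t) ⊆
          (Finset.range T).filter (fun t => t / L = i ∧ p t = true) := by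
        intro t
        simp only [Finset.mem_filter, Finset.mem_range, hP, hy]
        rintro ⟨ht, hne⟩
        by_cases hdiv : t / L = i
        · refine ⟨ht, hdiv, ?_⟩
          cases hpt : p t
          · exfalso
            apply hne
            simp [hdiv, ht, hpt]
          · rfl
        · exfalso
          apply hne
          have hne' : ¬ (i = t / L) := fun h => hdiv h.symm
          simp [hne', hdiv]
      exact le_trans (Finset.card_le_card hsub) (le_of_lt hik)
    · -- the learner errs on every round of phase i
      have hsub : (Finset.range T).filter (fun t => t / L = i) ⊆
          (Finset.range T).filter (fun t => predE n Lrn P y t ≠ y t) := by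
        intro t
        simp only [Finset.mem_filter, Finset.mem_range]
        rintro ⟨ht, hdiv⟩
        refine ⟨ht, ?_⟩
        rw [hpred t]
        simp only [hy, hdiv, ht, and_self, decide_true, true_and]
        cases p t <;> simp
      have hcard : ((Finset.range T).filter (fun t => t / L = i)).card = L := by
        rw [phase_eq i him, Nat.card_Ico]; omega
      unfold mistakesE
      calc k * m = L := rfl
        _ = ((Finset.range T).filter (fun t => t / L = i)).card := hcard.symm
        _ ≤ _ := Finset.card_le_card hsub
  · -- in every phase the learner predicts 1 at least k times
    push_neg at hcase
    set y : ℕ → Bool := fun _ => false with hy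
    have hpred : ∀ t, predE n Lrn P y t = p t := fun t => rfl
    have hmn : m < n := by
      have : m < T := by
        rcases Nat.lt_or_ge m 2 with h | h
        · have : m = 1 := by omega
          omega
        · have h1 : m < m * m := by nlinarith
          have h2 : m * m ≤ k * m ^ 2 := by nlinarith
          omega
      omega
    refine ⟨P, y, ⟨⟨m, hmn⟩, ?_⟩, ?_⟩
    · -- expert m never predicts 1 and never errs
      have : (Finset.range T).filter (fun t => P t ⟨m, hmn⟩ ≠ y t) = ∅ := by
        apply Finset.filter_false_of_mem
        intro t ht
        simp only [Finset.mem_range] at ht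
        have := hphase_lt t ht
        simp only [hP, hy, ne_eq, decide_eq_false_iff_not, not_not]
        intro hc
        omega
      rw [this]
      simp [hk]
    · -- the learner predicts 1 at least k times in each of the m phases
      unfold mistakesE
      have hfe : (Finset.range T).filter (fun t => predE n Lrn P y t ≠ y t) =
          (Finset.range T).filter (fun t => p t = true) := by
        apply Finset.filter_congr
        intro t _
        rw [hpred t]
        simp [hy]
      rw [hfe]
      have hfib : ((Finset.range T).filter (fun t => p t = true)).card =
          ∑ i ∈ Finset.range m,
            (((Finset.range T).filter (fun t => p t = true)).filter
              (fun t => t / L = i)).card := by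
        apply Finset.card_eq_sum_card_fiberwise
        intro t ht
        simp only [Finset.mem_coe, Finset.mem_filter, Finset.mem_range] at ht ⊢
        exact hphase_lt t ht.1
      rw [hfib]
      have hterm : ∀ i ∈ Finset.range m, k ≤
          (((Finset.range T).filter (fun t => p t = true)).filter
            (fun t => t / L = i)).card := by
        intro i hi
        simp only [Finset.mem_range] at hi
        have := hcase i hi
        rw [Finset.filter_filter]
        have heq : (Finset.range T).filter (fun t => p t = true ∧ t / L = i) =
            (Finset.range T).filter (fun t => t / L = i ∧ p t = true) := by
          apply Finset.filter_congr
          intro t _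
          simp [and_comm]
        rw [heq]
        exact this
      calc k * m = ∑ _i ∈ Finset.range m, k := by
            rw [Finset.sum_const, Finset.card_range, smul_eq_mul, mul_comm]
        _ ≤ _ := Finset.sum_le_sum hterm
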